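/- Let ε, Δt > 0 and μ ∈ ℝ. Suppose V : ℝ → ℂ² is C¹ and W : ℝ → ℂ² satisfies Q(V)(τ) = W(τ) for all τ, where Q(V)(τ) := V(τ) + (Δt/ε) iμ A(τ) V(τ) + (Δt/ε²) V′(τ). Set D(τ) := diag(e^{−iτ}, e^{iτ}) and Z(τ) := D(τ) V(τ). Then Z is C¹ and satisfies Z(τ) + iΩ Z(τ) + (Δt/ε²) Z′(τ) = D(τ) W(τ) for all τ, where Ω is the real symmetric matrix [[Δt/ε², μΔt/ε],[μΔt/ε, −Δt/ε²]]. -/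

import Mathlib

open Real Complex Matrix

/-- `A(τ) = [[0, e^{2iτ}],[e^{−2iτ}, 0]]`. -/
noncomputable def Amat (τ : ℝ) : Matrix (Fin 2) (Fin 2) ℂ :=
  !![0, Complex.exp (2 * Complex.I * τ); Complex.exp (-2 * Complex.I * τ), 0]

/-- The diagonal matrix `D(τ) = diag(e^{−iτ}, e^{iτ})`. -/
noncomputable def Dm (τ : ℝ) : Matrix (Fin 2) (Fin 2) ℂ :=
  !![Complex.exp (-Complex.I * τ), 0; 0, Complex.exp (Complex.I * τ)]

lemma exp_merge1 (τ : ℝ) :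
    Complex.exp (-Complex.I * τ) * Complex.exp (2 * Complex.I * τ) =
      Complex.exp (Complex.I * τ) := by
  rw [← Complex.exp_add]; ring_nf

lemma exp_merge2 (τ : ℝ) :
    Complex.exp (Complex.I * τ) * Complex.exp (-2 * Complex.I * τ) =
      Complex.exp (-Complex.I * τ) := by
  rw [← Complex.exp_add]; ring_nf

/-- If `Q(V) = W` where
`Q(V)(τ) = V(τ) + (Δt/ε) iμ A(τ) V(τ) + (Δt/ε²) V′(τ)`, then `Z(τ) = D(τ)V(τ)`
is `C¹` and satisfies `Z + iΩZ + (Δt/ε²)Z′ = D W`, with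
`Ω = [[Δt/ε², μΔt/ε],[μΔt/ε, −Δt/ε²]]`. -/
theorem stmt_13 (ε Δt : ℝ) (hε : 0 < ε) (hΔt : 0 < Δt) (μ : ℝ)
    (V : ℝ → Fin 2 → ℂ) (hV : ContDiff ℝ 1 V)
    (W : ℝ → Fin 2 → ℂ)
    (hQ : ∀ τ : ℝ,
      V τ + ((Δt / ε : ℝ) : ℂ) • (Complex.I * (μ : ℂ)) • (Amat τ).mulVec (V τ) +
        ((Δt / ε ^ 2 : ℝ) : ℂ) • deriv V τ = W τ)
    (Z : ℝ → Fin 2 → ℂ) (hZ : ∀ τ, Z τ = (Dm τ).mulVec (V τ))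
    (Ω : Matrix (Fin 2) (Fin 2) ℝ)
    (hΩ : Ω = !![Δt / ε ^ 2, μ * Δt / ε; μ * Δt / ε, -(Δt / ε ^ 2)]) :
    ContDiff ℝ 1 Z ∧
      ∀ τ : ℝ,
        Z τ + Complex.I • (Ω.map Complex.ofReal).mulVec (Z τ) +
            ((Δt / ε ^ 2 : ℝ) : ℂ) • deriv Z τ =
          (Dm τ).mulVec (W τ) := by
  -- componentwise description of Z
  have hZ0 : ∀ τ, Z τ 0 = Complex.exp (-Complex.I * τ) * V τ 0 := by
    intro τ; rw [hZ]; simp [Dm, Matrix.mulVec, dotProduct, Fin.sum_univ_two]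
  have hZ1 : ∀ τ, Z τ 1 = Complex.exp (Complex.I * τ) * V τ 1 := by
    intro τ; rw [hZ]; simp [Dm, Matrix.mulVec, dotProduct, Fin.sum_univ_two]
  -- contDiff of exponentials
  have he0 : ContDiff ℝ 1 (fun τ : ℝ => Complex.exp (-Complex.I * τ)) :=
    Complex.contDiff_exp.comp (contDiff_const.mul Complex.ofRealCLM.contDiff)
  have he1 : ContDiff ℝ 1 (fun τ : ℝ => Complex.exp (Complex.I * τ)) :=
    Complex.contDiff_exp.comp (contDiff_const.mul Complex.ofRealCLM.contDiff)
  have hVd : Differentiable ℝ V := hV.differentiable one_ne_zero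
  have hVi : ∀ i, ContDiff ℝ 1 (fun τ => V τ i) := fun i => (contDiff_pi.mp hV) i
  have hContZ : ContDiff ℝ 1 Z := by
    apply contDiff_pi.mpr
    intro i
    fin_cases i
    · exact (funext hZ0 : (fun τ => Z τ 0) = _) ▸ he0.mul (hVi 0)
    · exact (funext hZ1 : (fun τ => Z τ 1) = _) ▸ he1.mul (hVi 1)
  refine ⟨hContZ, ?_⟩
  intro τ
  -- derivative of Z at τ
  have hVdτ : HasDerivAt V (deriv V τ) τ := (hVd τ).hasDerivAt
  have hVdi : ∀ i, HasDerivAt (fun τ => V τ i) (deriv V τ i) τ := hasDerivAt_pi.mp hVdτ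
  have hde0 : HasDerivAt (fun τ : ℝ => Complex.exp (-Complex.I * τ))
      (Complex.exp (-Complex.I * τ) * (-Complex.I * 1)) τ :=
    (((hasDerivAt_id τ).ofReal_comp).const_mul (-Complex.I)).cexp
  have hde1 : HasDerivAt (fun τ : ℝ => Complex.exp (Complex.I * τ))
      (Complex.exp (Complex.I * τ) * (Complex.I * 1)) τ :=
    (((hasDerivAt_id τ).ofReal_comp).const_mul Complex.I).cexp
  set d0 : ℂ := Complex.exp (-Complex.I * τ) * (-Complex.I * 1) * V τ 0 +
      Complex.exp (-Complex.I * τ) * deriv V τ 0 with hd0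
  set d1 : ℂ := Complex.exp (Complex.I * τ) * (Complex.I * 1) * V τ 1 +
      Complex.exp (Complex.I * τ) * deriv V τ 1 with hd1
  have hZd : HasDerivAt Z ![d0, d1] τ := by
    apply hasDerivAt_pi.mpr
    intro i
    fin_cases i
    · exact (funext hZ0 : (fun τ => Z τ 0) = _) ▸ (hde0.mul (hVdi 0))
    · exact (funext hZ1 : (fun τ => Z τ 1) = _) ▸ (hde1.mul (hVdi 1))
  have hderivZ : deriv Z τ = ![d0, d1] := hZd.deriv
  funext i
  fin_cases i
  · have h := congrFun (hQ τ) 0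
    simp [Amat, Matrix.mulVec, dotProduct, Fin.sum_univ_two, Matrix.vecHead,
      Matrix.vecTail] at h
    simp [hΩ, hderivZ, hZ0, hZ1, Dm, Matrix.mulVec, dotProduct, Fin.sum_univ_two,
      Matrix.map_apply, Matrix.vecHead, Matrix.vecTail, neg_mul]
    ring_nf at h ⊢
    simp only [hd0, hd1, neg_mul]
    have e1 : Complex.exp (-(Complex.I * τ)) * Complex.exp (Complex.I * τ * 2) =
        Complex.exp (Complex.I * τ) := by rw [← Complex.exp_add]; ring_nf
    linear_combination Complex.exp (-(Complex.I * τ)) * h -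
      ((Δt : ℂ) * (ε : ℂ)⁻¹ * Complex.I * (μ : ℂ) * V τ 1) * e1
  · have h := congrFun (hQ τ) 1
    simp [Amat, Matrix.mulVec, dotProduct, Fin.sum_univ_two, Matrix.vecHead,
      Matrix.vecTail] at h
    simp [hΩ, hderivZ, hZ0, hZ1, Dm, Matrix.mulVec, dotProduct, Fin.sum_univ_two,
      Matrix.map_apply, Matrix.vecHead, Matrix.vecTail, neg_mul]
    ring_nf at h ⊢
    have e2 : Complex.exp (Complex.I * τ) * Complex.exp (-(Complex.I * τ * 2)) =
        Complex.exp (-(Complex.I * τ)) := by rw [← Complex.exp_add]; ring_nf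
    linear_combination Complex.exp (Complex.I * τ) * h -
      ((Δt : ℂ) * (ε : ℂ)⁻¹ * Complex.I * (μ : ℂ) * V τ 0) * e2
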